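/- There exist a finite type α, a symmetric irreflexive binary relation C on α, and closed sets P, Q, R (each X satisfying X = (X^⊥)^⊥, where A^⊥ = {p | ∀ q ∈ A, C p q}) such that the distributive law fails: (((P ∪ Q)^⊥)^⊥) ∩ R ≠ ((((P ∩ R) ∪ (Q ∩ R))^⊥)^⊥). That is, in the lattice of closed sets with infimum given by intersection and supremum of X, Y given by ((X ∪ Y)^⊥)^⊥, one has (P ⊔ Q) ⊓ R ≠ (P ⊓ R) ⊔ (Q ⊓ R). -/

import Mathlib

/-- The polar of a set with respect to a binary relation. -/
def polar {α : Type*} (C : α → α → Prop) (A : Set α) : Set α :=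
  {p | ∀ q ∈ A, C p q}

/-- The distributive law fails in the lattice of closed sets (time intervals):
the logic of simultaneity is a non-Boolean orthologic. -/
theorem distributivity_fails :
    ∃ (α : Type) (_ : Fintype α) (C : α → α → Prop),
      Symmetric C ∧ Irreflexive C ∧
      ∃ P Q R : Set α,
        P = polar C (polar C P) ∧ Q = polar C (polar C Q) ∧
        R = polar C (polar C R) ∧
        polar C (polar C (P ∪ Q)) ∩ R ≠
          polar C (polar C ((P ∩ R) ∪ (Q ∩ R))) := by
  refine ⟨Fin 4, inferInstance, fun i j => i.val + j.val = 1 ∨ i.val + j.val = 5,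
    ?_, ?_, {0}, {1}, {2}, ?_, ?_, ?_, ?_⟩
  · intro i j h; omega
  · intro i h; omega
  · have h1 : polar (fun i j : Fin 4 => i.val + j.val = 1 ∨ i.val + j.val = 5) {0} = {1} := by
      ext x; fin_cases x <;> simp [polar] <;> omega
    rw [h1]
    ext x; fin_cases x <;> simp [polar] <;> omega
  · have h1 : polar (fun i j : Fin 4 => i.val + j.val = 1 ∨ i.val + j.val = 5) {1} = {0} := by
      ext x; fin_cases x <;> simp [polar] <;> omega
    rw [h1]
    ext x; fin_cases x <;> simp [polar] <;> omega
  · have h1 : polar (fun i j : Fin 4 => i.val + j.val = 1 ∨ i.val + j.val = 5) {2} = {3} := by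
      ext x; fin_cases x <;> simp [polar] <;> omega
    rw [h1]
    ext x; fin_cases x <;> simp [polar] <;> omega
  · intro h
    have h2 : (2 : Fin 4) ∈ polar (fun i j : Fin 4 => i.val + j.val = 1 ∨ i.val + j.val = 5)
        (polar (fun i j : Fin 4 => i.val + j.val = 1 ∨ i.val + j.val = 5) (({0} : Set (Fin 4)) ∪ {1})) ∩ {2} := by
      constructor
      · intro q hq
        exfalso
        have := hq 0 (Or.inl rfl)
        have := hq 1 (Or.inr rfl)
        omega
      · rfl
    rw [h] at h2
    have h3 := h2
    have : polar (fun i j : Fin 4 => i.val + j.val = 1 ∨ i.val + j.val = 5)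
        ((({0} : Set (Fin 4)) ∩ {2}) ∪ ({1} ∩ {2})) = Set.univ := by
      ext x
      simp [polar]
    rw [this] at h3
    have := h3 2 (Set.mem_univ _)
    omega
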